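/- Let A ∈ M_m ⊗ M_m be of the form A = ∑_{i,j} E_{ij} ⊗ a_{ij} E_{ji} with a_{ij} ≥ 0 real numbers. Then the multiset of eigenvalues of A (with algebraic multiplicity) equals {a_{ii} : 1 ≤ i ≤ m} ∪ {±√(a_{ij} a_{ji}) : 1 ≤ i < j ≤ m}. -/

import Mathlib

open Matrix Kronecker BigOperators Polynomial

namespace MSpecAux

def bfun {m : ℕ} (p : Fin m × Fin m) : ℕ := min p.1.val p.2.val * m + max p.1.val p.2.val

lemma bfun_swap {m : ℕ} (p : Fin m × Fin m) : bfun (p.2, p.1) = bfun p := by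
  simp [bfun, Nat.min_comm, Nat.max_comm]

lemma enc_inj {m u v u' v' : ℕ} (hv : v < m) (hv' : v' < m) (h : u * m + v = u' * m + v') :
    u = u' ∧ v = v' := by
  have hm : 0 < m := Nat.lt_of_le_of_lt (Nat.zero_le v) hv
  have h1 : v = v' := by
    have h2 := congrArg (· % m) h
    simp only [Nat.mul_add_mod'] at h2
    rwa [Nat.mod_eq_of_lt hv, Nat.mod_eq_of_lt hv'] at h2
  subst h1
  have h3 : u * m = u' * m := by omega
  exact ⟨Nat.eq_of_mul_eq_mul_right hm h3, rfl⟩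

lemma bfun_eq_iff {m : ℕ} (p q : Fin m × Fin m) :
    bfun p = bfun q ↔ min p.1.val p.2.val = min q.1.val q.2.val ∧
      max p.1.val p.2.val = max q.1.val q.2.val := by
  have h1 := p.1.isLt; have h2 := p.2.isLt; have h3 := q.1.isLt; have h4 := q.2.isLt
  unfold bfun
  constructor
  · intro h
    exact enc_inj (by omega) (by omega) h
  · intro ⟨h5, h6⟩; rw [h5, h6]

lemma mem_fiber {m : ℕ} (p q : Fin m × Fin m) (hp : p.1 ≤ p.2) (h : bfun q = bfun p) :
    q = p ∨ q = (p.2, p.1) := by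
  rw [bfun_eq_iff] at h
  have hp' : p.1.val ≤ p.2.val := hp
  have hc : (q.1.val = p.1.val ∧ q.2.val = p.2.val) ∨
      (q.1.val = p.2.val ∧ q.2.val = p.1.val) := by omega
  rcases hc with ⟨h1, h2⟩ | ⟨h1, h2⟩
  · left; exact Prod.ext (Fin.ext h1) (Fin.ext h2)
  · right; exact Prod.ext (Fin.ext h1) (Fin.ext h2)

lemma charpoly_fin_one (N : Matrix (Fin 1) (Fin 1) ℂ) : N.charpoly = X - C (N 0 0) := by
  rw [Matrix.charpoly, Matrix.det_fin_one, charmatrix_apply_eq]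

lemma charpoly_fin_two (N : Matrix (Fin 2) (Fin 2) ℂ) :
    N.charpoly = (X - C (N 0 0)) * (X - C (N 1 1)) - C (N 0 1) * C (N 1 0) := by
  rw [Matrix.charpoly, Matrix.det_fin_two, charmatrix_apply_eq, charmatrix_apply_eq,
    charmatrix_apply_ne _ _ _ (by decide), charmatrix_apply_ne _ _ _ (by decide), neg_mul_neg]

end MSpecAux

open MSpecAux


/-- If `A = ∑_{i,j} E_{ij} ⊗ a_{ij} E_{ji}` with `a_{ij} ≥ 0`, then the multiset of
eigenvalues (with algebraic multiplicity, i.e. the roots of the characteristic polynomial)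
of `A` is `{a_{ii}} ∪ {±√(a_{ij} a_{ji}) : i < j}`. -/
theorem mspec_of_star_form (m : ℕ) (a : Fin m → Fin m → ℝ) (ha : ∀ i j, 0 ≤ a i j)
    (A : Matrix (Fin m × Fin m) (Fin m × Fin m) ℂ)
    (hA : A = ∑ i : Fin m, ∑ j : Fin m,
      (Matrix.single i j (1 : ℂ)) ⊗ₖ (Matrix.single j i ((a i j : ℝ) : ℂ))) :
    A.charpoly.roots =
      (Finset.univ.val.map fun i : Fin m => ((a i i : ℝ) : ℂ))
      + ((Finset.univ.filter fun p : Fin m × Fin m => p.1 < p.2).val.bind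
          fun p => {((Real.sqrt (a p.1 p.2 * a p.2 p.1) : ℝ) : ℂ),
                    -(((Real.sqrt (a p.1 p.2 * a p.2 p.1) : ℝ) : ℂ))}) := by
  classical
  -- entry formula
  have hA' : ∀ p q : Fin m × Fin m, A p q = if q = (p.2, p.1) then (a p.1 p.2 : ℂ) else 0 := by
    intro p q
    subst hA
    simp only [Matrix.sum_apply, kroneckerMap_apply, Matrix.single, of_apply]
    rw [Finset.sum_eq_single p.1, Finset.sum_eq_single p.2]
    · rcases p with ⟨p1, p2⟩; rcases q with ⟨q1, q2⟩
      simp only [Prod.mk.injEq, Prod.ext_iff]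
      split_ifs <;> simp_all
    · intro b _ hb; split_ifs <;> simp_all
    · simp
    · intro b _ hb
      apply Finset.sum_eq_zero; intro c _
      split_ifs <;> simp_all
    · simp
  let r : Fin m × Fin m → ℂ :=
    fun p => ((Real.sqrt (a p.1 p.2 * a p.2 p.1) : ℝ) : ℂ)
  set P : Finset (Fin m × Fin m) := Finset.univ.filter fun p : Fin m × Fin m => p.1 < p.2 with hP
  have hBT : A.BlockTriangular bfun := by
    intro p q h
    rw [hA']
    split_ifs with hq
    · exact absurd h (by rw [hq, bfun_swap]; exact lt_irrefl _)
    · rfl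
  -- block charpolys
  have hdiag : ∀ i : Fin m,
      (A.toSquareBlock bfun (bfun (i, i))).charpoly = X - C ((a i i : ℝ) : ℂ) := by
    intro i
    let e : {q : Fin m × Fin m // bfun q = bfun (i, i)} ≃ Fin 1 :=
      ⟨fun _ => 0, fun _ => ⟨(i, i), rfl⟩, fun q => by
        apply Subtype.ext
        rcases mem_fiber (i, i) q.val le_rfl q.property with h | h <;> simp [h],
       fun x => by omega⟩
    rw [← Matrix.charpoly_reindex e, charpoly_fin_one]
    congr 1
    have : (e.symm 0 : {q : Fin m × Fin m // bfun q = bfun (i, i)}) = ⟨(i, i), rfl⟩ := rfl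
    simp [Matrix.reindex_apply, Matrix.toSquareBlock_def, this, hA']
  have hpair : ∀ p : Fin m × Fin m, p.1 < p.2 →
      (A.toSquareBlock bfun (bfun p)).charpoly = (X - C (r p)) * (X - C (- r p)) := by
    intro p hp
    have hne : (p.2, p.1) ≠ p := by
      intro h
      rw [Prod.ext_iff] at h
      exact ne_of_lt hp h.2
    have hne' : p ≠ (p.2, p.1) := fun h => hne h.symm
    let e : {q : Fin m × Fin m // bfun q = bfun p} ≃ Fin 2 :=
      ⟨fun q => if q.val = p then 0 else 1,
       fun x => if x = 0 then ⟨p, rfl⟩ else ⟨(p.2, p.1), bfun_swap p⟩,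
       fun q => by
         rcases mem_fiber p q.val (le_of_lt hp) q.property with h | h
         · apply Subtype.ext; simp [h]
         · apply Subtype.ext; simp [h, hne]
       , fun x => by fin_cases x <;> simp [hne]⟩
    rw [← Matrix.charpoly_reindex e, MSpecAux.charpoly_fin_two]
    have e0 : (e.symm 0 : {q : Fin m × Fin m // bfun q = bfun p}) = ⟨p, rfl⟩ := rfl
    have e1 : (e.symm 1 : {q : Fin m × Fin m // bfun q = bfun p}) =
        ⟨(p.2, p.1), bfun_swap p⟩ := rfl
    have hrr : r p * r p = ((a p.1 p.2 : ℝ) : ℂ) * ((a p.2 p.1 : ℝ) : ℂ) := by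
      show ((Real.sqrt (a p.1 p.2 * a p.2 p.1) : ℝ) : ℂ) * _ = _
      rw [← Complex.ofReal_mul, Real.mul_self_sqrt (mul_nonneg (ha _ _) (ha _ _)),
        Complex.ofReal_mul]
    have hexp : (X - C (r p)) * (X - C (- r p)) = X * X - C (r p) * C (r p) := by
      rw [map_neg]; ring
    have h00 : (reindex e e (A.toSquareBlock bfun (bfun p))) 0 0 = 0 := by
      simp [Matrix.reindex_apply, Matrix.toSquareBlock_def, e0, hA', hne']
    have h11 : (reindex e e (A.toSquareBlock bfun (bfun p))) 1 1 = 0 := by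
      have : ((p.2, p.1) : Fin m × Fin m) ≠ (p.1, p.2) := by
        intro h; exact hne' (by rw [Prod.ext_iff] at h ⊢; exact ⟨h.2, h.1⟩)
      simp [Matrix.reindex_apply, Matrix.toSquareBlock_def, e1, hA', this]
    have h01 : (reindex e e (A.toSquareBlock bfun (bfun p))) 0 1 = ((a p.1 p.2 : ℝ) : ℂ) := by
      simp [Matrix.reindex_apply, Matrix.toSquareBlock_def, e0, e1, hA']
    have h10 : (reindex e e (A.toSquareBlock bfun (bfun p))) 1 0 = ((a p.2 p.1 : ℝ) : ℂ) := by
      simp [Matrix.reindex_apply, Matrix.toSquareBlock_def, e0, e1, hA']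
    rw [h00, h11, h01, h10, C_0, sub_zero, hexp, ← C_mul, ← C_mul, hrr]
  -- assembly
  set D : Finset (Fin m × Fin m) := Finset.univ.filter (fun p => p.1 ≤ p.2) with hD
  have himg : Finset.image bfun (Finset.univ : Finset (Fin m × Fin m)) =
      Finset.image bfun D := by
    apply le_antisymm
    · intro x hx
      obtain ⟨p, -, rfl⟩ := Finset.mem_image.mp hx
      rcases le_or_gt p.1 p.2 with h | h
      · exact Finset.mem_image.mpr ⟨p, Finset.mem_filter.mpr ⟨Finset.mem_univ _, h⟩, rfl⟩
      · exact Finset.mem_image.mpr ⟨(p.2, p.1),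
          Finset.mem_filter.mpr ⟨Finset.mem_univ _, le_of_lt h⟩, bfun_swap p⟩
    · exact Finset.image_subset_image (Finset.filter_subset _ _)
  have hinj : ∀ p ∈ D, ∀ q ∈ D, bfun p = bfun q → p = q := by
    intro p hp q hq h
    obtain ⟨p1, p2⟩ := p; obtain ⟨q1, q2⟩ := q
    simp only [hD, Finset.mem_filter] at hp hq
    rw [bfun_eq_iff] at h
    have hp' : p1.val ≤ p2.val := hp.2
    have hq' : q1.val ≤ q2.val := hq.2
    simp only at h
    have hc : p1.val = q1.val ∧ p2.val = q2.val := by omega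
    exact Prod.ext (Fin.ext hc.1) (Fin.ext hc.2)
  have hsplit : A.charpoly = (∏ i : Fin m, (X - C ((a i i : ℝ) : ℂ))) *
      ∏ p ∈ P, ((X - C (r p)) * (X - C (- r p))) := by
    rw [hBT.charpoly, himg, Finset.prod_image hinj,
      ← Finset.prod_filter_mul_prod_filter_not D (fun p => p.1 = p.2)]
    congr 1
    · have hD1 : D.filter (fun p => p.1 = p.2) =
          Finset.image (fun i : Fin m => (i, i)) Finset.univ := by
        ext p
        simp only [hD, Finset.filter_filter, Finset.mem_filter, Finset.mem_image,
          Finset.mem_univ, true_and]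
        constructor
        · rintro ⟨-, h⟩; exact ⟨p.1, by rcases p with ⟨p1, p2⟩; cases h; rfl⟩
        · rintro ⟨i, rfl⟩; exact ⟨le_rfl, rfl⟩
      rw [hD1, Finset.prod_image (fun x _ y _ h => congrArg Prod.fst h)]
      exact Finset.prod_congr rfl fun i _ => hdiag i
    · have hD2 : D.filter (fun p => ¬ p.1 = p.2) = P := by
        ext p
        simp only [hD, hP, Finset.filter_filter, Finset.mem_filter, Finset.mem_univ, true_and]
        constructor
        · rintro ⟨h1, h2⟩; exact lt_of_le_of_ne h1 h2
        · intro h; exact ⟨le_of_lt h, ne_of_lt h⟩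
      rw [hD2]
      refine Finset.prod_congr rfl fun p hp => hpair p ?_
      rw [hP] at hp
      exact (Finset.mem_filter.mp hp).2
  have hmul : A.charpoly =
      (((Finset.univ.val.map fun i : Fin m => ((a i i : ℝ) : ℂ))
        + P.val.bind fun p => {r p, - r p}).map fun c => X - C c).prod := by
    rw [hsplit, Multiset.map_add, Multiset.prod_add, Multiset.map_map, Multiset.map_bind,
      Multiset.prod_bind]
    congr 1
    rw [Finset.prod_eq_multiset_prod]
    congr 1
    apply Multiset.map_congr rfl
    intro p _
    simp
  rw [hmul, Polynomial.roots_multiset_prod_X_sub_C]
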